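/- arXiv:1310.7664 — 2 statements merged into one kernel-verified Lean document; each statement's English description precedes it below -/
import Mathlib

section
/- There is no nowhere-vanishing continuous section of the Hopf line bundle L₁ over S²; equivalently, there exist no f₁, f₂ ∈ C(S²) such that the function s := f₁a + f₂c on S³ (where f₁, f₂ are viewed as U(1)-invariant functions on S³) satisfies s·s̄ = 1. -/
/-- The 3-sphere, realized as the unit sphere in `ℂ²`. -/
abbrev S3 : Type := {p : ℂ × ℂ // ‖p.1‖ ^ 2 + ‖p.2‖ ^ 2 = 1}

/-- The first coordinate function `a : S³ → ℂ`. -/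
def aF (x : S3) : ℂ := x.1.1

/-- The second coordinate function `c : S³ → ℂ`. -/
def cF (x : S3) : ℂ := x.1.2

/-- `ω := √(2/(1 + ||a|² − |c|²|))`, a `U(1)`-invariant function on `S³`. -/
noncomputable def omegaF (x : S3) : ℝ :=
  Real.sqrt (2 / (1 + |‖aF x‖ ^ 2 - ‖cF x‖ ^ 2|))

/-- Two points of `S³` are in the same orbit of the diagonal `U(1)`-action. -/
def U1Rel (x y : S3) : Prop :=
  ∃ z : ℂ, ‖z‖ = 1 ∧ (y : ℂ × ℂ) = (z * (x : ℂ × ℂ).1, z * (x : ℂ × ℂ).2)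

/-- A function on `S³` is `U(1)`-invariant (i.e., descends to `S² = S³/U(1)`). -/
def U1Invariant (f : S3 → ℂ) : Prop := ∀ x y : S3, U1Rel x y → f y = f x

/-- A function on `S³` is `U(1)`-equivariant of degree 1, i.e., is a continuous section of the
Hopf line bundle `L₁`: `s(λx) = λ s(x)`. -/
def U1Equivariant (s : S3 → ℂ) : Prop :=
  ∀ (x y : S3) (z : ℂ), ‖z‖ = 1 →
    (y : ℂ × ℂ) = (z * (x : ℂ × ℂ).1, z * (x : ℂ × ℂ).2) → s y = z * s x

section HopfAux
open Complex Metric Set Real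

/-- Key lifting lemma: a continuous unimodular function on the plane admits a continuous
logarithm (angle) on the closed unit disk. -/
lemma hopf_exists_lift (K : ℂ → ℂ) (hK : Continuous K) (h1 : ∀ w, ‖K w‖ = 1) :
    ∃ θ : ℂ → ℝ, ContinuousOn θ (closedBall (0:ℂ) 1) ∧
      ∀ w ∈ closedBall (0:ℂ) 1, K w = Complex.exp (θ w * Complex.I) := by
  have habs : ∀ w, ‖K w‖ = 1 := fun w => by
    exact h1 w
  set D : Set ℂ := closedBall (0:ℂ) 1 with hD
  have hDc : IsCompact (D ×ˢ D) := (isCompact_closedBall _ _).prod (isCompact_closedBall _ _)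
  have hg : UniformContinuousOn (fun p : ℂ × ℂ => K (p.1 * p.2)) (D ×ˢ D) :=
    hDc.uniformContinuousOn_of_continuous
      ((hK.comp (continuous_fst.mul continuous_snd)).continuousOn)
  rw [Metric.uniformContinuousOn_iff] at hg
  obtain ⟨δ, hδ, hδ'⟩ := hg 1 one_pos
  obtain ⟨n, hn⟩ := exists_nat_one_div_lt hδ
  set N : ℕ := n + 1 with hN
  have hNpos : (0:ℝ) < N := by positivity
  have hmemD : ∀ k : ℕ, k ≤ N → ((k:ℂ)/N) ∈ D := by
    intro k hk
    rw [hD, mem_closedBall_zero_iff]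
    rw [norm_div]
    simp only [Complex.norm_natCast]
    rw [div_le_one hNpos]
    exact_mod_cast hk
  have main : ∀ k : ℕ, k ≤ N → ∃ θ : ℂ → ℝ, ContinuousOn θ D ∧
      ∀ w ∈ D, K ((k:ℂ)/N * w) = Complex.exp (θ w * Complex.I) := by
    intro k
    induction k with
    | zero =>
      intro _
      refine ⟨fun _ => Complex.arg (K 0), continuousOn_const, ?_⟩
      intro w _
      have := Complex.norm_mul_exp_arg_mul_I (K 0)
      rw [habs 0] at this
      simpa using this.symm
    | succ k ih =>
      intro hk
      obtain ⟨θ, hθc, hθ⟩ := ih (Nat.le_of_succ_le hk)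
      set r : ℂ → ℂ := fun w =>
        K (((k+1:ℕ):ℂ)/N * w) * (starRingEnd ℂ) (K ((k:ℂ)/N * w)) with hr
      have hrc : Continuous r := by
        apply Continuous.mul
        · exact hK.comp (continuous_const.mul continuous_id)
        · exact Complex.continuous_conj.comp (hK.comp (continuous_const.mul continuous_id))
      have hre : ∀ w ∈ D, (1:ℝ)/2 < (r w).re := by
        intro w hw
        set a : ℂ := ((k+1:ℕ):ℂ)/N * w with ha
        set b : ℂ := ((k:ℕ):ℂ)/N * w with hb
        have hp : (((k+1:ℕ):ℂ)/N, w) ∈ D ×ˢ D :=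
          ⟨hmemD (k+1) hk, hw⟩
        have hq : (((k:ℕ):ℂ)/N, w) ∈ D ×ˢ D :=
          ⟨hmemD k (Nat.le_of_succ_le hk), hw⟩
        have hdist : dist ((((k+1:ℕ):ℂ)/N, w) : ℂ × ℂ) (((k:ℕ):ℂ)/N, w) < δ := by
          rw [Prod.dist_eq]
          simp only [dist_self]
          rw [max_eq_left dist_nonneg]
          rw [dist_eq_norm]
          have : ((k+1:ℕ):ℂ)/N - ((k:ℕ):ℂ)/N = 1/(N:ℂ) := by
            push_cast; ring
          rw [this]
          rw [norm_div, norm_one, Complex.norm_natCast]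
          calc 1/(N:ℝ) = 1/(n+1:ℝ) := by norm_num [hN]
          _ < δ := hn
        have hKab : ‖K a - K b‖ < 1 := by
          have := hδ' _ hp _ hq hdist
          rw [dist_eq_norm] at this
          exact this
        have hb1 : K b * (starRingEnd ℂ) (K b) = 1 := by
          rw [Complex.mul_conj]
          rw [Complex.normSq_eq_norm_sq, habs b]
          norm_num
        have hsub : r w - 1 = (K a - K b) * (starRingEnd ℂ) (K b) := by
          simp only [hr]
          rw [sub_mul]
          rw [hb1]
        have hnorm_sub : ‖r w - 1‖ < 1 := by
          rw [hsub, norm_mul, RCLike.norm_conj, h1 b, mul_one]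
          exact hKab
        have hr1 : ‖r w‖ = 1 := by
          simp only [hr]
          rw [norm_mul, RCLike.norm_conj, h1, h1, mul_one]
        have e1 : Complex.normSq (r w - 1) = Complex.normSq (r w) - 2 * (r w).re + 1 := by
          simp [Complex.normSq_apply, Complex.sub_re, Complex.sub_im]; ring
        have e2 : Complex.normSq (r w) = 1 := by
          rw [← Complex.sq_norm, hr1]; norm_num
        have e3 : Complex.normSq (r w - 1) < 1 := by
          rw [← Complex.sq_norm]
          nlinarith [norm_nonneg (r w - 1)]
        rw [e1, e2] at e3
        linarith
      refine ⟨fun w => θ w + Complex.arg (r w), ?_, ?_⟩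
      · apply hθc.add
        intro w hw
        exact (Complex.continuousAt_arg (Or.inl (by linarith [hre w hw]))).comp_continuousWithinAt
          hrc.continuousWithinAt
      · intro w hw
        have hKb := hθ w hw
        have hb1 : K ((k:ℂ)/N * w) * (starRingEnd ℂ) (K ((k:ℂ)/N * w)) = 1 := by
          rw [Complex.mul_conj, Complex.normSq_eq_norm_sq, habs]
          norm_num
        have habs_r : ‖r w‖ = 1 := by
          simp only [hr]
          rw [norm_mul, RCLike.norm_conj, h1, h1, mul_one]
        have hexp_r : Complex.exp ((Complex.arg (r w) : ℂ) * Complex.I) = r w := by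
          have := Complex.norm_mul_exp_arg_mul_I (r w)
          rw [habs_r] at this
          simpa using this
        have : ((θ w + Complex.arg (r w) : ℝ) : ℂ) * Complex.I
            = (θ w : ℂ) * Complex.I + (Complex.arg (r w) : ℂ) * Complex.I := by
          push_cast; ring
        rw [this, Complex.exp_add, ← hKb, hexp_r]
        simp only [hr]
        linear_combination (-(K (((k+1:ℕ):ℂ)/N * w))) * hb1
  obtain ⟨θ, hθc, hθ⟩ := main N le_rfl
  refine ⟨θ, hθc, ?_⟩
  intro w hw
  have := hθ w hw
  rwa [div_self (by exact_mod_cast hNpos.ne'), one_mul] at this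

lemma hopf_no_retraction :
    ¬ ∃ K : ℂ → ℂ, Continuous K ∧ (∀ w, ‖K w‖ = 1) ∧ (∀ w, ‖w‖ = 1 → K w = w) := by
  rintro ⟨K, hK, h1, hb⟩
  obtain ⟨θ, hθc, hθ⟩ := hopf_exists_lift K hK h1
  have hcirc : ∀ t : ℝ, ‖Complex.exp ((t:ℂ) * Complex.I)‖ = 1 := by
    intro t
    rw [Complex.norm_exp]
    simp
  have hmem : ∀ t : ℝ, Complex.exp ((t:ℂ) * Complex.I) ∈ closedBall (0:ℂ) 1 := by
    intro t; rw [mem_closedBall_zero_iff, hcirc]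
  set g : ℝ → ℝ := fun t => θ (Complex.exp ((t:ℂ) * Complex.I)) - t with hg
  have hgc : Continuous g := by
    apply Continuous.sub _ continuous_id
    exact hθc.comp_continuous
      (Complex.continuous_exp.comp (Complex.continuous_ofReal.mul continuous_const)) hmem
  have hint : ∀ t : ℝ, ∃ m : ℤ, g t = 2 * π * m := by
    intro t
    have h2 : K (Complex.exp ((t:ℂ) * Complex.I)) = Complex.exp ((t:ℂ) * Complex.I) :=
      hb _ (hcirc t)
    have h3 : Complex.exp ((θ (Complex.exp ((t:ℂ) * Complex.I)) : ℂ) * Complex.I)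
        = Complex.exp ((t:ℂ) * Complex.I) := (hθ _ (hmem t)).symm.trans h2
    have h4 : Complex.exp (((g t : ℝ) : ℂ) * Complex.I) = 1 := by
      have : ((g t : ℝ) : ℂ) * Complex.I
          = (θ (Complex.exp ((t:ℂ) * Complex.I)) : ℂ) * Complex.I - (t:ℂ) * Complex.I := by
        simp only [hg]; push_cast; ring
      rw [this, Complex.exp_sub, h3, div_self (Complex.exp_ne_zero _)]
    rw [Complex.exp_eq_one_iff] at h4
    obtain ⟨m, hm⟩ := h4
    refine ⟨m, ?_⟩
    have h5 : ((g t : ℝ) : ℂ) = (m:ℂ) * (2 * π) :=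
      mul_right_cancel₀ Complex.I_ne_zero (by rw [hm]; ring)
    have h6 : (g t : ℝ) = (m:ℝ) * (2 * π) := by exact_mod_cast h5
    rw [h6]; ring
  have e0 : g 0 = θ 1 := by simp [hg]
  have e1 : g (2 * π) = θ 1 - 2 * π := by
    have : ((2 * π : ℝ) : ℂ) * Complex.I = 2 * (π:ℂ) * Complex.I := by push_cast; ring
    simp only [hg, this, Complex.exp_two_pi_mul_I]
  have h2π : (0:ℝ) ≤ 2 * π := by positivity
  have hiv := intermediate_value_Icc' h2π hgc.continuousOn
  have hval : g 0 - π ∈ Icc (g (2*π)) (g 0) := by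
    constructor
    · rw [e1, e0]; linarith [Real.pi_pos]
    · linarith [Real.pi_pos]
  obtain ⟨t, _, hgt⟩ := hiv hval
  obtain ⟨m, hm⟩ := hint t
  obtain ⟨m0, hm0⟩ := hint 0
  rw [hm, hm0] at hgt
  have h7 : 2*(m:ℝ) = 2*(m0:ℝ) - 1 := by
    have h8 : π * (2*(m:ℝ) - (2*(m0:ℝ) - 1)) = 0 := by linear_combination hgt
    rcases mul_eq_zero.mp h8 with h | h
    · exact absurd h Real.pi_ne_zero
    · linarith
  have h9 : 2*m = 2*m0 - 1 := by exact_mod_cast h7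
  omega


/-- Clamp a complex number into the closed unit disk. -/
noncomputable def clampC (w : ℂ) : ℂ := w / ((max ‖w‖ 1 : ℝ) : ℂ)

lemma clampC_norm_le (w : ℂ) : ‖clampC w‖ ≤ 1 := by
  rw [clampC, norm_div, Complex.norm_real]
  rw [Real.norm_eq_abs, abs_of_pos (lt_of_lt_of_le one_pos (le_max_right _ _))]
  rw [div_le_one (lt_of_lt_of_le one_pos (le_max_right _ _))]
  exact le_max_left _ _

lemma clampC_eq_self {w : ℂ} (h : ‖w‖ ≤ 1) : clampC w = w := by
  rw [clampC, max_eq_right h]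
  simp

lemma continuous_clampC : Continuous clampC := by
  apply Continuous.div continuous_id
  · exact Complex.continuous_ofReal.comp (continuous_norm.max continuous_const)
  · intro w
    rw [Ne, Complex.ofReal_eq_zero]
    exact (lt_of_lt_of_le one_pos (le_max_right _ _)).ne'

lemma sq_norm_aux (w : ℂ) :
    ‖((Real.sqrt (1 - ‖clampC w‖^2/2) : ℝ) : ℂ)‖ ^ 2 + ‖clampC w / ((Real.sqrt 2 : ℝ) : ℂ)‖ ^ 2 = 1 := by
  have h1 : ‖clampC w‖ ≤ 1 := clampC_norm_le w
  have h0 : (0:ℝ) ≤ ‖clampC w‖ := norm_nonneg _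
  have hnn : (0:ℝ) ≤ 1 - ‖clampC w‖^2/2 := by nlinarith
  rw [Complex.norm_real, Real.norm_eq_abs, _root_.abs_of_nonneg (Real.sqrt_nonneg _),
    Real.sq_sqrt hnn, norm_div, Complex.norm_real, Real.norm_eq_abs,
    _root_.abs_of_nonneg (Real.sqrt_nonneg _), div_pow, Real.sq_sqrt (by norm_num : (0:ℝ) ≤ 2)]
  ring

/-- Point of `S³` over the "north" chart. -/
noncomputable def ptP (w : ℂ) : S3 :=
  ⟨(((Real.sqrt (1 - ‖clampC w‖^2/2) : ℝ) : ℂ), clampC w / ((Real.sqrt 2 : ℝ) : ℂ)),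
    sq_norm_aux w⟩

/-- Point of `S³` over the "south" chart. -/
noncomputable def ptQ (w : ℂ) : S3 :=
  ⟨(clampC w / ((Real.sqrt 2 : ℝ) : ℂ), ((Real.sqrt (1 - ‖clampC w‖^2/2) : ℝ) : ℂ)),
    by have := sq_norm_aux w; linarith⟩

lemma continuous_ptP : Continuous ptP := by
  apply Continuous.subtype_mk
  apply Continuous.prodMk
  · exact Complex.continuous_ofReal.comp (Real.continuous_sqrt.comp
      (continuous_const.sub ((continuous_clampC.norm.pow 2).div_const 2)))
  · exact continuous_clampC.div_const _

lemma continuous_ptQ : Continuous ptQ := by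
  apply Continuous.subtype_mk
  apply Continuous.prodMk
  · exact continuous_clampC.div_const _
  · exact Complex.continuous_ofReal.comp (Real.continuous_sqrt.comp
      (continuous_const.sub ((continuous_clampC.norm.pow 2).div_const 2)))

/-- On the boundary circle, `ptQ (conj w)` is in the `U(1)`-orbit of `ptP w`. -/
lemma boundary_rel {w : ℂ} (h : ‖w‖ = 1) :
    ((ptQ ((starRingEnd ℂ) w) : ℂ × ℂ))
      = ((starRingEnd ℂ) w * (ptP w : ℂ × ℂ).1, (starRingEnd ℂ) w * (ptP w : ℂ × ℂ).2) := by
  have hcw : ‖(starRingEnd ℂ) w‖ = 1 := by rw [RCLike.norm_conj]; exact h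
  have e1 : clampC w = w := clampC_eq_self h.le
  have e2 : clampC ((starRingEnd ℂ) w) = (starRingEnd ℂ) w := clampC_eq_self hcw.le
  have hsq : Real.sqrt (1 - (1:ℝ)^2/2) = (Real.sqrt 2)⁻¹ := by
    rw [show (1 - (1:ℝ)^2/2) = 2⁻¹ by norm_num, Real.sqrt_inv]
  have hmul : (starRingEnd ℂ) w * w = 1 := by
    have hn : Complex.normSq w = 1 := by
      rw [Complex.normSq_eq_norm_sq, h]; norm_num
    rw [mul_comm, Complex.mul_conj, hn]; norm_num
  show (clampC ((starRingEnd ℂ) w) / ((Real.sqrt 2 : ℝ) : ℂ),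
      ((Real.sqrt (1 - ‖clampC ((starRingEnd ℂ) w)‖^2/2) : ℝ) : ℂ))
    = ((starRingEnd ℂ) w * ((Real.sqrt (1 - ‖clampC w‖^2/2) : ℝ) : ℂ),
      (starRingEnd ℂ) w * (clampC w / ((Real.sqrt 2 : ℝ) : ℂ)))
  rw [e1, e2, hcw, h, Prod.mk.injEq]
  constructor
  · rw [hsq, Complex.ofReal_inv, div_eq_mul_inv]
  · rw [hsq, Complex.ofReal_inv, ← mul_div_assoc, hmul, one_div]


/-- The Hopf line bundle `L₁` over `S²` has no nowhere-vanishing continuous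
section: there are no `U(1)`-invariant continuous `f₁, f₂ : S³ → ℂ` such that
`s := f₁ a + f₂ c` satisfies `s s̄ = 1`. -/
theorem no_unimodular_section_of_hopf_line_bundle :
    ¬ ∃ f₁ f₂ : S3 → ℂ, Continuous f₁ ∧ Continuous f₂ ∧
      U1Invariant f₁ ∧ U1Invariant f₂ ∧
      ∀ x : S3, (f₁ x * aF x + f₂ x * cF x) * star (f₁ x * aF x + f₂ x * cF x) = 1 := by
  rintro ⟨f₁, f₂, hc₁, hc₂, hi₁, hi₂, hs⟩
  set s : S3 → ℂ := fun x => f₁ x * aF x + f₂ x * cF x with hsdef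
  have haF : Continuous aF := continuous_fst.comp continuous_subtype_val
  have hcF : Continuous cF := continuous_snd.comp continuous_subtype_val
  have hscont : Continuous s := (hc₁.mul haF).add (hc₂.mul hcF)
  have hs1 : ∀ x, s x * (starRingEnd ℂ) (s x) = 1 := fun x => hs x
  have hsnorm : ∀ x, ‖s x‖ = 1 := by
    intro x
    have h := hs1 x
    rw [Complex.mul_conj] at h
    have h2 : Complex.normSq (s x) = 1 := by exact_mod_cast h
    have h3 : ‖s x‖^2 = 1 := by
      rw [Complex.sq_norm]; exact h2
    nlinarith [norm_nonneg (s x)]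
  have hequiv : ∀ (x y : S3) (z : ℂ), ‖z‖ = 1 →
      (y : ℂ × ℂ) = (z * (x : ℂ × ℂ).1, z * (x : ℂ × ℂ).2) → s y = z * s x := by
    intro x y z hz hy
    have h1 : f₁ y = f₁ x := hi₁ x y ⟨z, hz, hy⟩
    have h2 : f₂ y = f₂ x := hi₂ x y ⟨z, hz, hy⟩
    have ha : aF y = z * aF x := by
      show (y : ℂ × ℂ).1 = z * (x : ℂ × ℂ).1
      rw [hy]
    have hc : cF y = z * cF x := by
      show (y : ℂ × ℂ).2 = z * (x : ℂ × ℂ).2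
      rw [hy]
    simp only [hsdef, h1, h2, ha, hc]; ring
  apply hopf_no_retraction
  refine ⟨fun w => s (ptP w) * (starRingEnd ℂ) (s (ptQ ((starRingEnd ℂ) w))), ?_, ?_, ?_⟩
  · exact (hscont.comp continuous_ptP).mul
      (Complex.continuous_conj.comp (hscont.comp (continuous_ptQ.comp Complex.continuous_conj)))
  · intro w
    rw [norm_mul, RCLike.norm_conj, hsnorm, hsnorm, mul_one]
  · intro w hw
    have hcw : ‖(starRingEnd ℂ) w‖ = 1 := by rw [RCLike.norm_conj]; exact hw
    have hrel := boundary_rel hw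
    have heq := hequiv (ptP w) (ptQ ((starRingEnd ℂ) w)) ((starRingEnd ℂ) w) hcw hrel
    show s (ptP w) * (starRingEnd ℂ) (s (ptQ ((starRingEnd ℂ) w))) = w
    rw [heq, map_mul, Complex.conj_conj]
    have h1 := hs1 (ptP w)
    linear_combination w * h1

end HopfAux
end

section
/- There is no U(1)-equivariant unital ∗-algebra homomorphism f : O(SU_q(2)) → C(S³) for 0 < q < 1, where O(SU_q(2)) carries the right U(1)-coaction α ↦ α ⊗ u, γ ↦ γ ⊗ u and C(S³) the diagonal U(1)-action: equivalently, there is no unital ∗-homomorphism f with f(α) ∈ Γ(L₁) and f(γ) ∈ Γ(L₁). -/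
open Real Complex Finset

/-- positivity of the real part of `z * conj w` for nearby unit vectors -/
lemma re_mul_conj_pos (z w : ℂ) (hz : ‖z‖ = 1) (hw : ‖w‖ = 1) (h : dist z w < 1) :
    0 < (z * (starRingEnd ℂ) w).re := by
  have hz' : z.re ^ 2 + z.im ^ 2 = 1 := by
    have h1 := Complex.sq_norm z
    rw [Complex.normSq_apply, hz] at h1
    nlinarith
  have hw' : w.re ^ 2 + w.im ^ 2 = 1 := by
    have h1 := Complex.sq_norm w
    rw [Complex.normSq_apply, hw] at h1
    nlinarith
  have hd : (z.re - w.re) ^ 2 + (z.im - w.im) ^ 2 < 1 := by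
    have h1 : dist z w = ‖z - w‖ := Complex.dist_eq z w
    have h2 := Complex.sq_norm (z - w)
    rw [Complex.normSq_apply] at h2
    have h0 : (0:ℝ) ≤ ‖z - w‖ := norm_nonneg _
    rw [h1] at h
    simp only [Complex.sub_re, Complex.sub_im] at h2
    nlinarith
  simp only [Complex.mul_re, Complex.conj_re, Complex.conj_im]
  nlinarith

/-- rotation lemma: for a unit complex number with positive real part,
`exp (arctan (im/re) * I)` recovers it. -/
lemma exp_arctan_eq (R : ℂ) (h1 : ‖R‖ = 1) (h2 : 0 < R.re) :
    Complex.exp ((Real.arctan (R.im / R.re) : ℝ) * Complex.I) = R := by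
  have harg : |Complex.arg R| < π / 2 :=
    Complex.abs_arg_lt_pi_div_two_iff.2 (Or.inl h2)
  have h3 : Real.arctan (R.im / R.re) = Complex.arg R := by
    rw [← Complex.tan_arg]
    exact Real.arctan_tan (by linarith [(abs_lt.1 harg).1]) (abs_lt.1 harg).2
  rw [h3]
  have h4 := Complex.norm_mul_exp_arg_mul_I R
  rwa [h1, Complex.ofReal_one, one_mul] at h4

/-- The topological heart: no continuous nowhere-vanishing (unit-valued) equivariant
function on `S³` (the Hopf line bundle is nontrivial). -/
lemma no_unit_equivariant_section (A : S3 → ℂ) (hA : Continuous A)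
    (hEq : U1Equivariant A) (hUnit : ∀ x, ‖A x‖ = 1) : False := by
  classical
  -- the test surface φ : ℝ² → S³
  have hφmem : ∀ p : ℝ × ℝ,
      ‖((Real.cos (π / 2 * p.1) : ℝ) : ℂ) * Complex.exp (((2 * π * p.2 : ℝ) : ℂ) * Complex.I)‖ ^ 2
        + ‖((Real.sin (π / 2 * p.1) : ℝ) : ℂ)‖ ^ 2 = 1 := by
    intro p
    rw [norm_mul, Complex.norm_exp_ofReal_mul_I, mul_one, Complex.norm_real,
      Complex.norm_real, Real.norm_eq_abs, Real.norm_eq_abs, _root_.sq_abs, _root_.sq_abs]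
    rw [add_comm]
    exact Real.sin_sq_add_cos_sq (π / 2 * p.1)
  set φ : ℝ × ℝ → S3 := fun p =>
    ⟨(((Real.cos (π / 2 * p.1) : ℝ) : ℂ) * Complex.exp (((2 * π * p.2 : ℝ) : ℂ) * Complex.I),
      ((Real.sin (π / 2 * p.1) : ℝ) : ℂ)), hφmem p⟩ with hφ
  have hφc : Continuous φ := by
    apply Continuous.subtype_mk
    fun_prop
  set H : ℝ × ℝ → ℂ := fun p => A (φ p) with hHdef
  have hH : Continuous H := hA.comp hφc
  have hH1 : ∀ p, ‖H p‖ = 1 := fun p => hUnit _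
  have hHne : ∀ p, H p ≠ 0 := fun p => by
    intro h; have := hH1 p; rw [h] at this; simp at this
  have F2 : ∀ p, H p * (starRingEnd ℂ) (H p) = 1 := by
    intro p
    rw [Complex.mul_conj]
    have : Complex.normSq (H p) = 1 := by
      have := hH1 p
      rw [← Complex.sq_norm, this]; norm_num
    rw [this]; norm_num
  -- equivariance on s = 0
  have F3 : ∀ t : ℝ, H (0, t) = Complex.exp (((2 * π * t : ℝ) : ℂ) * Complex.I) * H (0, 0) := by
    intro t
    apply hEq (φ (0, 0)) (φ (0, t))
    · exact Complex.norm_exp_ofReal_mul_I _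
    · show (((Real.cos (π / 2 * 0) : ℝ) : ℂ) * Complex.exp (((2 * π * t : ℝ) : ℂ) * Complex.I),
        ((Real.sin (π / 2 * 0) : ℝ) : ℂ)) = _
      simp [hφ, Real.cos_zero, Real.sin_zero]
  -- constancy at s = 1
  have F4 : ∀ t : ℝ, φ (1, t) = φ (1, 0) := by
    intro t
    apply Subtype.ext
    show (((Real.cos (π / 2 * 1) : ℝ) : ℂ) * _, _) = (((Real.cos (π / 2 * 1) : ℝ) : ℂ) * _, _)
    norm_num [Real.cos_pi_div_two]
  -- periodicity in t
  have F5 : ∀ s : ℝ, φ (s, 1) = φ (s, 0) := by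
    intro s
    apply Subtype.ext
    have e1 : ((2 * π * (1:ℝ) : ℝ) : ℂ) * Complex.I = 2 * (π : ℂ) * Complex.I := by
      push_cast; ring
    have e0 : ((2 * π * (0:ℝ) : ℝ) : ℂ) * Complex.I = 0 := by push_cast; ring
    show (_ * Complex.exp (((2 * π * (1:ℝ) : ℝ) : ℂ) * Complex.I), _)
      = (_ * Complex.exp (((2 * π * (0:ℝ) : ℝ) : ℂ) * Complex.I), _)
    rw [e1, e0, Complex.exp_two_pi_mul_I, Complex.exp_zero]
  -- uniform continuity on the compact square
  have hK : IsCompact (Set.Icc (0:ℝ) 1 ×ˢ Set.Icc (0:ℝ) 1) := isCompact_Icc.prod isCompact_Icc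
  have hUC := hK.uniformContinuousOn_of_continuous hH.continuousOn
  rw [Metric.uniformContinuousOn_iff] at hUC
  obtain ⟨δ, hδ, hUC⟩ := hUC 1 one_pos
  obtain ⟨n, hn⟩ := exists_nat_gt (max 5 (1 / δ))
  have h5n : (5:ℝ) < n := lt_of_le_of_lt (le_max_left _ _) hn
  have h1δ : 1 / δ < (n:ℝ) := lt_of_le_of_lt (le_max_right _ _) hn
  have hn0 : (0:ℝ) < n := by linarith
  have hnne : (n:ℝ) ≠ 0 := ne_of_gt hn0
  have hnδ : 1 / (n:ℝ) < δ := by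
    rw [div_lt_iff₀ hn0]
    rw [div_lt_iff₀ hδ] at h1δ
    linarith
  set Rf : ℝ → ℕ → ℂ :=
    fun s j => H (s, ((j:ℝ) + 1) / n) * (starRingEnd ℂ) (H (s, (j:ℝ) / n)) with hRf
  set δf : ℝ → ℕ → ℝ := fun s j => Real.arctan ((Rf s j).im / (Rf s j).re) with hδf
  set W : ℝ → ℝ := fun s => ∑ j ∈ Finset.range n, δf s j with hW
  -- positivity of real parts on the square
  have C1 : ∀ s ∈ Set.Icc (0:ℝ) 1, ∀ j < n, 0 < (Rf s j).re := by
    intro s hs j hj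
    apply re_mul_conj_pos _ _ (hH1 _) (hH1 _)
    apply hUC
    · refine Set.mk_mem_prod hs ⟨by positivity, ?_⟩
      rw [div_le_one hn0]
      exact_mod_cast Nat.succ_le_of_lt hj
    · refine Set.mk_mem_prod hs ⟨by positivity, ?_⟩
      rw [div_le_one hn0]
      exact_mod_cast le_of_lt hj
    · rw [Prod.dist_eq]
      simp only [dist_self]
      rw [max_eq_right dist_nonneg, Real.dist_eq]
      have : ((j:ℝ) + 1) / n - (j:ℝ) / n = 1 / n := by field_simp; ring
      rw [this, abs_of_pos (by positivity)]
      exact hnδ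
  -- each Rf has modulus 1
  have habsR : ∀ s j, ‖Rf s j‖ = 1 := by
    intro s j
    rw [hRf]
    simp only [norm_mul, Complex.norm_conj]
    rw [hH1, hH1, mul_one]
  -- the rotation step
  have rot : ∀ s j, 0 < (Rf s j).re →
      H (s, (j:ℝ) / n) * Complex.exp ((δf s j : ℝ) * Complex.I) = H (s, ((j:ℝ) + 1) / n) := by
    intro s j hre
    rw [hδf]
    rw [exp_arctan_eq (Rf s j) (habsR s j) hre]
    have h2 := F2 (s, (j:ℝ) / n)
    rw [hRf]
    linear_combination H (s, ((j:ℝ) + 1) / n) * h2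
  -- telescoping
  have tele : ∀ s ∈ Set.Icc (0:ℝ) 1, ∀ k, k ≤ n →
      H (s, 0) * Complex.exp (((∑ j ∈ Finset.range k, δf s j : ℝ) : ℂ) * Complex.I)
        = H (s, (k:ℝ) / n) := by
    intro s hs k
    induction k with
    | zero => simp
    | succ k ih =>
      intro hk
      have hk' : k ≤ n := Nat.le_of_succ_le hk
      have hkn : k < n := Nat.lt_of_succ_le hk
      rw [Finset.sum_range_succ]
      have hsplit : (((∑ j ∈ Finset.range k, δf s j) + δf s k : ℝ) : ℂ) * Complex.I
          = ((∑ j ∈ Finset.range k, δf s j : ℝ) : ℂ) * Complex.I + ((δf s k : ℝ) : ℂ) * Complex.I := by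
        push_cast; ring
      rw [hsplit, Complex.exp_add, ← mul_assoc, ih hk', rot s k (C1 s hs k hkn)]
      congr 2
      push_cast; ring
  -- exp (W s * I) = 1 on the square
  have hWint : ∀ s ∈ Set.Icc (0:ℝ) 1, ∃ k : ℤ, W s = 2 * π * k := by
    intro s hs
    have h := tele s hs n le_rfl
    rw [div_self hnne] at h
    have h1 : H (s, (1:ℝ)) = H (s, 0) := by rw [hHdef]; simp only; rw [F5 s]
    rw [h1] at h
    have hexp1 : Complex.exp (((W s : ℝ) : ℂ) * Complex.I) = 1 := by
      have := mul_left_cancel₀ (hHne (s, 0)) (h.trans (mul_one _).symm)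
      rw [hW]; exact this
    rw [Complex.exp_eq_one_iff] at hexp1
    obtain ⟨k, hk⟩ := hexp1
    refine ⟨k, ?_⟩
    have : ((W s : ℝ) : ℂ) = ((2 * π * k : ℝ) : ℂ) := by
      apply mul_right_cancel₀ Complex.I_ne_zero
      rw [hk]; push_cast; ring
    exact_mod_cast this
  -- W 0 = 2π
  have hRf0 : ∀ j : ℕ, Rf 0 j = Complex.exp (((2 * π / n : ℝ) : ℂ) * Complex.I) := by
    intro j
    rw [hRf]
    simp only
    rw [F3 (((j:ℝ) + 1) / n), F3 ((j:ℝ) / n)]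
    rw [map_mul]
    have hc : (starRingEnd ℂ) (Complex.exp (((2 * π * ((j:ℝ) / n) : ℝ) : ℂ) * Complex.I))
        = Complex.exp (-(((2 * π * ((j:ℝ) / n) : ℝ) : ℂ) * Complex.I)) := by
      rw [← Complex.exp_conj, map_mul, Complex.conj_ofReal, Complex.conj_I]
      ring_nf
    rw [hc, mul_mul_mul_comm, F2 (0, 0), mul_one, ← Complex.exp_add]
    congr 1
    have hreal : 2 * π * (((j:ℝ) + 1) / n) - 2 * π * ((j:ℝ) / n) = 2 * π / n := by
      field_simp
      ring
    rw [show ((2 * π * (((j:ℝ) + 1) / n) : ℝ) : ℂ) * Complex.I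
        + -(((2 * π * ((j:ℝ) / n) : ℝ) : ℂ) * Complex.I)
        = ((2 * π * (((j:ℝ) + 1) / n) - 2 * π * ((j:ℝ) / n) : ℝ) : ℂ) * Complex.I by
      push_cast; ring, hreal]
  have hW0 : W 0 = 2 * π := by
    have hθpos : 0 < 2 * π / n := by positivity
    have hθlt : 2 * π / n < π / 2 := by
      rw [div_lt_iff₀ hn0]
      nlinarith [Real.pi_pos]
    have hδf0 : ∀ j, δf 0 j = 2 * π / n := by
      intro j
      rw [hδf]
      simp only
      rw [hRf0 j]
      have hre : (Complex.exp (((2 * π / n : ℝ) : ℂ) * Complex.I)).re = Real.cos (2 * π / n) := by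
        rw [Complex.exp_re]
        simp [Complex.mul_re]
      have him : (Complex.exp (((2 * π / n : ℝ) : ℂ) * Complex.I)).im = Real.sin (2 * π / n) := by
        rw [Complex.exp_im]
        simp [Complex.mul_re, Complex.mul_im]
      rw [hre, him, ← Real.tan_eq_sin_div_cos]
      exact Real.arctan_tan (by linarith) hθlt
    rw [hW]
    simp only
    rw [Finset.sum_congr rfl (fun j _ => hδf0 j), Finset.sum_const, Finset.card_range,
      nsmul_eq_mul]
    field_simp
  -- W 1 = 0
  have hW1 : W 1 = 0 := by
    have hRf1 : ∀ j : ℕ, Rf 1 j = 1 := by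
      intro j
      rw [hRf]
      simp only
      have e1 : H (1, ((j:ℝ) + 1) / n) = H (1, 0) := by rw [hHdef]; simp only; rw [F4]
      have e2 : H (1, (j:ℝ) / n) = H (1, 0) := by rw [hHdef]; simp only; rw [F4]
      rw [e1, e2, F2]
    rw [hW]
    simp only
    apply Finset.sum_eq_zero
    intro j _
    rw [hδf]
    simp only
    rw [hRf1 j]
    simp [Real.arctan_zero]
  -- continuity of W on [0,1]
  have hWcont : ContinuousOn W (Set.Icc (0:ℝ) 1) := by
    rw [hW]
    apply continuousOn_finset_sum
    intro j hj
    have hj' : j < n := Finset.mem_range.1 hj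
    have hRc : Continuous (fun s : ℝ => Rf s j) := by
      apply Continuous.mul
      · exact hH.comp (continuous_id.prodMk continuous_const)
      · exact Complex.continuous_conj.comp (hH.comp (continuous_id.prodMk continuous_const))
    apply Real.continuous_arctan.comp_continuousOn
    apply ContinuousOn.div
    · exact (Complex.continuous_im.comp hRc).continuousOn
    · exact (Complex.continuous_re.comp hRc).continuousOn
    · intro s hs
      exact ne_of_gt (C1 s hs j hj')
  -- intermediate value theorem
  have hsub := intermediate_value_Icc' (zero_le_one) hWcont
  rw [hW1, hW0] at hsub
  have hπmem : π ∈ Set.Icc (0:ℝ) (2 * π) := ⟨le_of_lt Real.pi_pos, by linarith [Real.pi_pos]⟩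
  obtain ⟨s, hs, hWs⟩ := hsub hπmem
  obtain ⟨k, hk⟩ := hWint s hs
  rw [hWs] at hk
  have h2k : (1:ℝ) = 2 * (k:ℝ) := by
    have : π * 1 = π * (2 * (k:ℝ)) := by linear_combination hk
    exact mul_left_cancel₀ Real.pi_ne_zero this
  have : (1:ℤ) = 2 * k := by exact_mod_cast h2k
  omega

/-- For `0 < q < 1` there is no `U(1)`-equivariant unital ∗-homomorphism
`O(SU_q(2)) → C(S³)`. Equivalently: there are no continuous `U(1)`-equivariant functions
`A, G : S³ → ℂ` (the would-be images of the generators `α`, `γ`, both lying in `Γ(L₁)`)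
satisfying the defining relations of `O(SU_q(2))` pointwise. -/
theorem no_equivariant_hom_from_suq2 (q : ℝ) (hq : 0 < q) (hq1 : q < 1) :
    ¬ ∃ A G : S3 → ℂ, Continuous A ∧ Continuous G ∧
      U1Equivariant A ∧ U1Equivariant G ∧
      (∀ x : S3, A x * G x = (q : ℂ) * (G x * A x)) ∧
      (∀ x : S3, A x * star (G x) = (q : ℂ) * (star (G x) * A x)) ∧
      (∀ x : S3, G x * star (G x) = star (G x) * G x) ∧
      (∀ x : S3, star (A x) * A x + star (G x) * G x = 1) ∧
      (∀ x : S3, A x * star (A x) + (q : ℂ) ^ 2 * (G x * star (G x)) = 1) := by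
  rintro ⟨A, G, hAc, _, hAe, _, _, _, _, h8, h9⟩
  -- relations 8 and 9 force G = 0
  have hG0 : ∀ x, G x = 0 := by
    intro x
    have e8 := h8 x
    have e9 := h9 x
    have key : ((1:ℂ) - (q:ℂ) ^ 2) * (star (G x) * G x) = 0 := by
      linear_combination e8 - e9
    have hq2 : ((1:ℂ) - (q:ℂ) ^ 2) ≠ 0 := by
      intro h
      have h' : (1:ℝ) - q ^ 2 = 0 := by exact_mod_cast h
      nlinarith
    have := (mul_eq_zero.1 key).resolve_left hq2
    rcases mul_eq_zero.1 this with h | h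
    · exact star_eq_zero.1 h
    · exact h
  -- hence |A x| = 1
  have hA1 : ∀ x, ‖A x‖ = 1 := by
    intro x
    have e8 := h8 x
    rw [hG0 x] at e8
    simp only [star_zero, mul_zero, zero_mul, add_zero] at e8
    have hns : (Complex.normSq (A x) : ℂ) = 1 := by
      rw [Complex.normSq_eq_conj_mul_self]
      exact e8
    have hns' : Complex.normSq (A x) = 1 := by exact_mod_cast hns
    have habs : ‖A x‖ ^ 2 = 1 := by rw [Complex.sq_norm]; exact hns'
    have h0 : (0:ℝ) ≤ ‖A x‖ := norm_nonneg _
    nlinarith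
  exact no_unit_equivariant_section A hAc hAe hA1
end
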